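/- For every region F, both δ(F) and δ'(F) are antichains in Δ⁺. Moreover, the correspondences F ↦ δ(F) and F ↦ δ'(F) are bijections between the set of regions and the set of antichains of positive roots. -/

import Mathlib

open scoped RealInnerProductSpace

/-- A finite reduced crystallographic root system spanning a real inner
product space `V` (whose inner product is automatically invariant under the
Weyl group, since the reflections are isometries), together with a fixed
system of positive roots and the corresponding simple roots. -/
structure RootSystemData (V : Type)
    [NormedAddCommGroup V] [InnerProductSpace ℝ V] : Type where
  roots : Finset V
  pos : Finset V
  simples : Finset V
  zero_not_mem : (0 : V) ∉ roots
  span_roots : Submodule.span ℝ (roots : Set V) = ⊤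
  crystallographic : ∀ α ∈ roots, ∀ β ∈ roots,
    ∃ n : ℤ, 2 * ⟪α, β⟫ = (n : ℝ) * ⟪β, β⟫
  reduced : ∀ α ∈ roots, ∀ t : ℝ, t • α ∈ roots → t = 1 ∨ t = -1
  reflect_mem : ∀ α ∈ roots, ∀ β ∈ roots,
    β - (2 * ⟪β, α⟫ / ⟪α, α⟫) • α ∈ roots
  pos_subset : pos ⊆ roots
  mem_pos_or_neg_mem_pos : ∀ α ∈ roots, α ∈ pos ∨ -α ∈ pos
  neg_not_pos : ∀ α ∈ pos, -α ∉ pos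
  simples_subset : simples ⊆ pos
  simples_linearIndependent : LinearIndependent ℝ (fun α : simples => (α : V))
  pos_sum_of_simples : ∀ β ∈ pos, ∃ c : V →₀ ℕ,
    (c.support : Set V) ⊆ (simples : Set V) ∧ β = c.sum fun α n => (n : ℝ) • α

namespace RootSystemData

variable {V : Type} [NormedAddCommGroup V] [InnerProductSpace ℝ V]
variable (R : RootSystemData V)

/-- `β₁ > β₂` : the difference `β₁ - β₂` is a nonempty sum of positive roots. -/
def Gt (x y : V) : Prop :=
  ∃ m : Multiset V, m ≠ 0 ∧ (∀ z ∈ m, z ∈ R.pos) ∧ x - y = m.sum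

/-- `β₁ ≥ β₂` : either `β₁ > β₂` or `β₁ = β₂`. -/
def Ge (x y : V) : Prop := R.Gt x y ∨ x = y

/-- An antichain: a set of pairwise incomparable positive roots. -/
def IsRootAntichain (A : Set V) : Prop :=
  A ⊆ (R.pos : Set V) ∧ ∀ x ∈ A, ∀ y ∈ A, x ≠ y → ¬ R.Ge x y ∧ ¬ R.Ge y x

/-- An orthogonal antichain: an antichain of pairwise orthogonal positive roots. -/
def IsOrthAntichain (A : Set V) : Prop :=
  R.IsRootAntichain A ∧ ∀ x ∈ A, ∀ y ∈ A, x ≠ y → ⟪x, y⟫ = 0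

/-- The complement, inside the open dominant Weyl chamber, of the hyperplane
arrangement `⟨β,·⟩ = 1`, `β ∈ Δ⁺`. -/
def chamberSet : Set V :=
  {χ | (∀ α ∈ R.simples, 0 < ⟪α, χ⟫) ∧ ∀ β ∈ R.pos, ⟪β, χ⟫ ≠ 1}

/-- A region: a connected component of `chamberSet`. -/
def IsRegion (F : Set V) : Prop :=
  ∃ χ ∈ R.chamberSet, F = connectedComponentIn R.chamberSet χ

/-- The positive roots `β` with `⟨β,·⟩ < 1` on `F`. -/
def ltOne (F : Set V) : Set V := {β | β ∈ R.pos ∧ ∀ χ ∈ F, ⟪β, χ⟫ < 1}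

/-- The positive roots `β` with `⟨β,·⟩ > 1` on `F`. -/
def gtOne (F : Set V) : Set V := {β | β ∈ R.pos ∧ ∀ χ ∈ F, 1 < ⟪β, χ⟫}

/-- `δ(F)`: the maximal roots among the positive roots `β` with `⟨β,·⟩ < 1` on `F`. -/
def deltaLow (F : Set V) : Set V :=
  {β | β ∈ R.ltOne F ∧ ∀ β' ∈ R.ltOne F, ¬ R.Gt β' β}

/-- `δ'(F)`: the minimal roots among the positive roots `β` with `⟨β,·⟩ > 1` on `F`. -/
def deltaHigh (F : Set V) : Set V :=
  {β | β ∈ R.gtOne F ∧ ∀ β' ∈ R.gtOne F, ¬ R.Gt β β'}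

/-- Simply laced: all roots have the same length, normalized so `⟨β,β⟩ = 2`. -/
def SimplyLaced : Prop := ∀ β ∈ R.roots, ⟪β, β⟫ = 2

/-- Irreducibility: the set of roots admits no nontrivial partition into two
mutually orthogonal parts. -/
def IsIrreducible : Prop :=
  ∀ S : Set V, S ⊆ (R.roots : Set V) →
    (∀ a ∈ S, ∀ b ∈ (R.roots : Set V) \ S, ⟪a, b⟫ = 0) →
    S = ∅ ∨ S = (R.roots : Set V)

/-- The height of a positive root: the sum of its (unique) coordinates in the
simple roots. -/
noncomputable def height (β : V) : ℕ :=
  letI := Classical.propDecidable (∃ c : V →₀ ℕ, (c.support : Set V) ⊆ (R.simples : Set V) ∧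
      β = c.sum (fun α n => (n : ℝ) • α))
  if h : ∃ c : V →₀ ℕ, (c.support : Set V) ⊆ (R.simples : Set V) ∧
      β = c.sum (fun α n => (n : ℝ) • α)
  then (Classical.choose h).sum fun _ n => n
  else 0

/-- The root system has the Cartan–Killing type given by the (simply laced)
Cartan matrix `A`: there is an indexing of the simple roots under which, in the
normalization `⟨β,β⟩ = 2`, the inner products of simple roots are the entries
of `A`. -/
def HasType {n : ℕ} (A : Matrix (Fin n) (Fin n) ℤ) : Prop :=
  ∃ e : Fin n ≃ {x // x ∈ R.simples},
    ∀ i j, ⟪((e i : V)), ((e j : V))⟫ = (A i j : ℝ)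

/-- The reflections `s_β`, `β ∈ S`, as linear isometries of `V`. -/
def reflectionsOn (S : Set V) : Set (V ≃ₗᵢ[ℝ] V) :=
  {g | ∃ β ∈ S, ∀ v, g v = v - (2 * ⟪v, β⟫ / ⟪β, β⟫) • β}

/-- The Weyl group `W`, generated by the reflections in all roots. -/
def weyl : Subgroup (V ≃ₗᵢ[ℝ] V) :=
  Subgroup.closure (reflectionsOn (R.roots : Set V))

/-- The reflection subgroup generated by the reflections `s_β`, `β ∈ S`. -/
def weylOf (S : Set V) : Subgroup (V ≃ₗᵢ[ℝ] V) :=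
  Subgroup.closure (reflectionsOn S)

/-- `Δ_S = Δ ∩ span_ℝ(S)`. -/
def rootsIn (S : Set V) : Set V :=
  {β | β ∈ R.roots ∧ β ∈ Submodule.span ℝ S}

/-- `Δ_S⁺ = Δ⁺ ∩ span_ℝ(S)`. -/
def posIn (S : Set V) : Set V :=
  {β | β ∈ R.pos ∧ β ∈ Submodule.span ℝ S}

/-- The inversion set `N(w) = {β ∈ Δ⁺ : w(β) ∈ -Δ⁺}`. -/
def inversionSet (w : V ≃ₗᵢ[ℝ] V) : Set V :=
  {β | β ∈ R.pos ∧ -(w β) ∈ R.pos}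

end RootSystemData
namespace RootSystemData

open Finset

variable {V : Type} [NormedAddCommGroup V] [InnerProductSpace ℝ V]
variable (R : RootSystemData V)

/-! ### Basic facts -/

lemma root_ne_zero {β : V} (h : β ∈ R.roots) : β ≠ 0 :=
  fun e => R.zero_not_mem (e ▸ h)

lemma pos_ne_zero {β : V} (h : β ∈ R.pos) : β ≠ 0 :=
  R.root_ne_zero (R.pos_subset h)

lemma inner_self_pos_of_root {β : V} (h : β ∈ R.roots) : (0:ℝ) < ⟪β, β⟫ := by
  have h1 : ⟪β, β⟫ = ‖β‖ ^ 2 := real_inner_self_eq_norm_sq β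
  rw [h1]
  exact pow_pos (norm_pos_iff.mpr (R.root_ne_zero h)) 2

lemma neg_mem_roots {β : V} (h : β ∈ R.roots) : -β ∈ R.roots := by
  have h2 := R.reflect_mem β h β h
  have hne : ⟪β, β⟫ ≠ (0:ℝ) := ne_of_gt (R.inner_self_pos_of_root h)
  have : (2 * ⟪β, β⟫ / ⟪β, β⟫) = (2:ℝ) := by field_simp
  rw [this] at h2
  have : β - (2 : ℝ) • β = -β := by
    rw [two_smul]; abel
  rwa [this] at h2

/-! ### Coordinates with respect to the simple roots -/

lemma sum_coord_eq {c : V →₀ ℕ} (h : (c.support : Set V) ⊆ (R.simples : Set V)) :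
    (c.sum fun α n => (n : ℝ) • α) = ∑ α ∈ R.simples, (c α : ℝ) • α := by
  apply Finsupp.sum_of_support_subset
  · exact_mod_cast h
  · intro i _; simp

lemma simples_coeff_eq_zero {g : V → ℝ} (h : ∑ α ∈ R.simples, g α • α = 0) :
    ∀ α ∈ R.simples, g α = 0 := by
  have h2 := linearIndependent_iff'.mp R.simples_linearIndependent Finset.univ
      (fun i => g (i : V)) ?_
  · intro α hα; exact h2 ⟨α, hα⟩ (Finset.mem_univ _)
  · rw [← Finset.sum_coe_sort R.simples (fun a => g a • a)] at h
    exact h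

lemma coord_unique {c d : V →₀ ℕ} (hc : (c.support : Set V) ⊆ (R.simples : Set V))
    (hd : (d.support : Set V) ⊆ (R.simples : Set V))
    (h : (c.sum fun α n => (n : ℝ) • α) = d.sum fun α n => (n : ℝ) • α) : c = d := by
  rw [R.sum_coord_eq hc, R.sum_coord_eq hd] at h
  have h0 : ∑ α ∈ R.simples, ((c α : ℝ) - (d α : ℝ)) • α = 0 := by
    simp only [sub_smul]
    rw [Finset.sum_sub_distrib, h, sub_self]
  have := R.simples_coeff_eq_zero h0
  ext α
  by_cases hα : α ∈ R.simples
  · have := this α hα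
    have : (c α : ℝ) = (d α : ℝ) := by linarith
    exact_mod_cast this
  · have hc0 : c α = 0 := by
      by_contra hne
      exact hα (by exact_mod_cast hc (Finsupp.mem_support_iff.mpr hne))
    have hd0 : d α = 0 := by
      by_contra hne
      exact hα (by exact_mod_cast hd (Finsupp.mem_support_iff.mpr hne))
    rw [hc0, hd0]

/-- Canonical coordinates of a positive root. -/
noncomputable def coords (β : V) : V →₀ ℕ :=
  letI := Classical.propDecidable (∃ c : V →₀ ℕ, (c.support : Set V) ⊆ (R.simples : Set V) ∧
      β = c.sum (fun α n => (n : ℝ) • α))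
  if h : ∃ c : V →₀ ℕ, (c.support : Set V) ⊆ (R.simples : Set V) ∧
      β = c.sum (fun α n => (n : ℝ) • α)
  then Classical.choose h else 0

lemma coords_spec {β : V} (h : β ∈ R.pos) :
    ((R.coords β).support : Set V) ⊆ (R.simples : Set V) ∧
      β = (R.coords β).sum fun α n => (n : ℝ) • α := by
  have hex := R.pos_sum_of_simples β h
  rw [coords, dif_pos hex]
  exact Classical.choose_spec hex

lemma height_eq {β : V} {c : V →₀ ℕ} (hc : (c.support : Set V) ⊆ (R.simples : Set V))
    (hc2 : β = c.sum fun α n => (n : ℝ) • α) : R.height β = c.sum fun _ n => n := by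
  have hex : ∃ c : V →₀ ℕ, (c.support : Set V) ⊆ (R.simples : Set V) ∧
      β = c.sum (fun α n => (n : ℝ) • α) := ⟨c, hc, hc2⟩
  rw [height, dif_pos hex]
  congr 1
  exact R.coord_unique (Classical.choose_spec hex).1 hc
    ((Classical.choose_spec hex).2.symm.trans hc2)

lemma coords_ne_zero {β : V} (h : β ∈ R.pos) : R.coords β ≠ 0 := by
  intro e
  have := (R.coords_spec h).2
  rw [e] at this
  simp at this
  exact R.pos_ne_zero h this

lemma height_simple {α : V} (h : α ∈ R.simples) : R.height α = 1 := by
  have h1 : ((Finsupp.single α 1 : V →₀ ℕ).support : Set V) ⊆ (R.simples : Set V) := by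
    intro x hx
    have := Finsupp.support_single_subset (a := α) (b := (1:ℕ)) (by exact_mod_cast hx)
    simp at this
    simpa [this] using h
  have h2 : α = (Finsupp.single α 1 : V →₀ ℕ).sum fun α n => (n : ℝ) • α := by
    rw [Finsupp.sum_single_index] <;> simp
  rw [R.height_eq h1 h2, Finsupp.sum_single_index rfl]

lemma height_add {a b : V} (ha : a ∈ R.pos) (hb : b ∈ R.pos) (hab : a + b ∈ R.pos) :
    R.height (a + b) = R.height a + R.height b := by
  classical
  obtain ⟨hsa, hea⟩ := R.coords_spec ha
  obtain ⟨hsb, heb⟩ := R.coords_spec hb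
  have hsupp : (((R.coords a) + (R.coords b)).support : Set V) ⊆ (R.simples : Set V) := by
    intro x hx
    have hx' : x ∈ (R.coords a).support ∪ (R.coords b).support :=
      Finsupp.support_add (by exact_mod_cast hx)
    rcases Finset.mem_union.mp hx' with h | h
    · exact hsa (by exact_mod_cast h)
    · exact hsb (by exact_mod_cast h)
  have hsum : a + b = ((R.coords a) + (R.coords b)).sum fun α n => (n : ℝ) • α := by
    rw [Finsupp.sum_add_index' (by intro i; simp) (by intro i m n; push_cast; rw [add_smul])]
    rw [← hea, ← heb]
  rw [R.height_eq hsupp hsum]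
  rw [Finsupp.sum_add_index' (by intro i; rfl) (by intro i m n; rfl)]
  rw [← R.height_eq hsa hea, ← R.height_eq hsb heb]

lemma one_le_height {β : V} (h : β ∈ R.pos) : 1 ≤ R.height β := by
  obtain ⟨hs, he⟩ := R.coords_spec h
  rw [R.height_eq hs he]
  obtain ⟨α, hα⟩ := Finsupp.support_nonempty_iff.mpr (R.coords_ne_zero h)
  have hα1 : 1 ≤ R.coords β α := Nat.one_le_iff_ne_zero.mpr (Finsupp.mem_support_iff.mp hα)
  calc 1 ≤ R.coords β α := hα1
    _ ≤ (R.coords β).sum fun _ n => n := by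
        exact Finset.single_le_sum (f := fun a => R.coords β a) (fun i _ => Nat.zero_le _) hα

end RootSystemData

namespace RootSystemData

open Finset

variable {V : Type} [NormedAddCommGroup V] [InnerProductSpace ℝ V]
variable (R : RootSystemData V)

/-! ### The simple roots form a basis -/

lemma span_simples : ⊤ ≤ Submodule.span ℝ (Set.range fun α : {x // x ∈ R.simples} => (α : V)) := by
  rw [show (Set.range fun α : {x // x ∈ R.simples} => (α : V)) = (R.simples : Set V) from
    Subtype.range_coe]
  rw [← R.span_roots]
  apply Submodule.span_le.mpr
  intro β hβ
  have hmem : ∀ γ ∈ R.pos, γ ∈ Submodule.span ℝ (R.simples : Set V) := by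
    intro γ hγ
    obtain ⟨hs, he⟩ := R.coords_spec hγ
    rw [he, R.sum_coord_eq hs]
    apply Submodule.sum_mem
    intro α hα
    exact Submodule.smul_mem _ _ (Submodule.subset_span hα)
  rcases R.mem_pos_or_neg_mem_pos β hβ with h | h
  · exact hmem β h
  · have := hmem _ h
    have h2 := Submodule.neg_mem _ this
    simpa using h2

/-- The simple roots as a basis of `V`. -/
noncomputable def sbasis : Module.Basis {x // x ∈ R.simples} ℝ V :=
  Module.Basis.mk R.simples_linearIndependent R.span_simples

/-- The sum-of-coordinates linear functional. -/
noncomputable def ell : V →ₗ[ℝ] ℝ := R.sbasis.sumCoords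

lemma ell_simple {α : V} (h : α ∈ R.simples) : R.ell α = 1 := by
  have h1 : R.sbasis ⟨α, h⟩ = α := Module.Basis.mk_apply _ _ _
  have : R.ell (R.sbasis ⟨α, h⟩) = 1 := by
    rw [ell, Module.Basis.coe_sumCoords]
    simp only [Module.Basis.repr_self]
    rw [Finsupp.sum_single_index rfl]
    rfl
  rwa [h1] at this

lemma ell_pos_root {β : V} (h : β ∈ R.pos) : R.ell β = (R.height β : ℝ) := by
  obtain ⟨hs, he⟩ := R.coords_spec h
  conv_lhs => rw [he, R.sum_coord_eq hs]
  rw [map_sum]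
  simp only [map_smul, smul_eq_mul]
  have : ∀ α ∈ R.simples, (R.coords β α : ℝ) * R.ell α = (R.coords β α : ℝ) := by
    intro α hα; rw [R.ell_simple hα, mul_one]
  rw [Finset.sum_congr rfl this]
  rw [R.height_eq hs he]
  rw [Finsupp.sum_of_support_subset _ (by exact_mod_cast hs) _ (by intro i _; rfl)]
  push_cast
  rfl

lemma one_le_ell {β : V} (h : β ∈ R.pos) : 1 ≤ R.ell β := by
  rw [R.ell_pos_root h]
  exact_mod_cast R.one_le_height h

lemma ell_root_pos {β : V} (h : β ∈ R.pos) : 0 < R.ell β :=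
  lt_of_lt_of_le one_pos (R.one_le_ell h)

/-! ### Dominance and positivity -/

lemma inner_pos_of_dominant {χ β : V} (hdom : ∀ α ∈ R.simples, (0:ℝ) < ⟪α, χ⟫)
    (h : β ∈ R.pos) : (0:ℝ) < ⟪β, χ⟫ := by
  obtain ⟨hs, he⟩ := R.coords_spec h
  rw [he, R.sum_coord_eq hs, sum_inner]
  apply Finset.sum_pos'
  · intro α hα
    rw [real_inner_smul_left]
    exact mul_nonneg (by positivity) (le_of_lt (hdom α hα))
  · obtain ⟨α, hα⟩ := Finsupp.support_nonempty_iff.mpr (R.coords_ne_zero h)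
    refine ⟨α, by exact_mod_cast hs hα, ?_⟩
    rw [real_inner_smul_left]
    have h1 : 1 ≤ R.coords β α := Nat.one_le_iff_ne_zero.mpr (Finsupp.mem_support_iff.mp hα)
    have h2 := hdom α (by exact_mod_cast hs hα)
    have : (1:ℝ) ≤ (R.coords β α : ℝ) := by exact_mod_cast h1
    nlinarith

/-! ### Multiset helpers -/

lemma msum_nonneg {m : Multiset ℝ} (h : ∀ a ∈ m, 0 ≤ a) : 0 ≤ m.sum := by
  induction m using Multiset.induction_on with
  | empty => simp
  | cons a s ih =>
    rw [Multiset.sum_cons]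
    have := h a (Multiset.mem_cons_self _ _)
    have hs := ih (fun b hb => h b (Multiset.mem_cons_of_mem hb))
    linarith

lemma msum_pos {m : Multiset ℝ} (hm : m ≠ 0) (h : ∀ a ∈ m, 0 < a) : 0 < m.sum := by
  obtain ⟨a, ha⟩ := Multiset.exists_mem_of_ne_zero hm
  obtain ⟨t, rfl⟩ := Multiset.exists_cons_of_mem ha
  rw [Multiset.sum_cons]
  have h1 := h a (Multiset.mem_cons_self _ _)
  have h2 := msum_nonneg (m := t) (fun b hb => le_of_lt (h b (Multiset.mem_cons_of_mem hb)))
  linarith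

lemma one_le_msum {m : Multiset ℝ} (hm : m ≠ 0) (h : ∀ a ∈ m, 1 ≤ a) : 1 ≤ m.sum := by
  obtain ⟨a, ha⟩ := Multiset.exists_mem_of_ne_zero hm
  obtain ⟨t, rfl⟩ := Multiset.exists_cons_of_mem ha
  rw [Multiset.sum_cons]
  have h1 := h a (Multiset.mem_cons_self _ _)
  have h2 := msum_nonneg (m := t) (fun b hb => le_trans zero_le_one (h b (Multiset.mem_cons_of_mem hb)))
  linarith

lemma msum_nonpos {m : Multiset ℝ} (h : ∀ a ∈ m, a ≤ 0) : m.sum ≤ 0 := by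
  induction m using Multiset.induction_on with
  | empty => simp
  | cons a s ih =>
    rw [Multiset.sum_cons]
    have := h a (Multiset.mem_cons_self _ _)
    have hs := ih (fun b hb => h b (Multiset.mem_cons_of_mem hb))
    linarith

lemma exists_pos_of_msum_pos {m : Multiset V} {f : V → ℝ} (h : 0 < (m.map f).sum) :
    ∃ a ∈ m, 0 < f a := by
  by_contra hc
  push_neg at hc
  have : (m.map f).sum ≤ 0 := by
    apply msum_nonpos
    intro a ha
    obtain ⟨b, hb, rfl⟩ := Multiset.mem_map.mp ha
    exact hc b hb
  linarith

lemma inner_msum_left (m : Multiset V) (x : V) :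
    (⟪m.sum, x⟫ : ℝ) = (m.map fun v => (⟪v, x⟫ : ℝ)).sum := by
  induction m using Multiset.induction_on with
  | empty => simp
  | cons a s ih => simp [Multiset.sum_cons, inner_add_left, ih]

lemma inner_msum_right (x : V) (m : Multiset V) :
    (⟪x, m.sum⟫ : ℝ) = (m.map fun v => (⟪x, v⟫ : ℝ)).sum := by
  induction m using Multiset.induction_on with
  | empty => simp
  | cons a s ih => simp [Multiset.sum_cons, inner_add_right, ih]

lemma ell_msum_pos {m : Multiset V} (hm : m ≠ 0) (hall : ∀ z ∈ m, z ∈ R.pos) :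
    0 < R.ell m.sum := by
  rw [map_multiset_sum]
  apply msum_pos
  · simpa using hm
  · intro a ha
    obtain ⟨b, hb, rfl⟩ := Multiset.mem_map.mp ha
    exact R.ell_root_pos (hall b hb)

lemma one_le_ell_msum {m : Multiset V} (hm : m ≠ 0) (hall : ∀ z ∈ m, z ∈ R.pos) :
    1 ≤ R.ell m.sum := by
  rw [map_multiset_sum]
  apply one_le_msum
  · simpa using hm
  · intro a ha
    obtain ⟨b, hb, rfl⟩ := Multiset.mem_map.mp ha
    exact R.one_le_ell (hall b hb)

lemma ell_msum_nonneg {m : Multiset V} (hall : ∀ z ∈ m, z ∈ R.pos) :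
    0 ≤ R.ell m.sum := by
  rw [map_multiset_sum]
  apply msum_nonneg
  intro a ha
  obtain ⟨b, hb, rfl⟩ := Multiset.mem_map.mp ha
  exact le_of_lt (R.ell_root_pos (hall b hb))

lemma msum_ne_zero {m : Multiset V} (hm : m ≠ 0) (hall : ∀ z ∈ m, z ∈ R.pos) :
    m.sum ≠ 0 := by
  intro e
  have := R.ell_msum_pos hm hall
  rw [e] at this
  simp at this

lemma inner_msum_pos {χ : V} {m : Multiset V} (hdom : ∀ α ∈ R.simples, (0:ℝ) < ⟪α, χ⟫)
    (hm : m ≠ 0) (hall : ∀ z ∈ m, z ∈ R.pos) : (0:ℝ) < ⟪m.sum, χ⟫ := by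
  rw [inner_msum_left]
  apply msum_pos
  · simpa using hm
  · intro a ha
    obtain ⟨b, hb, rfl⟩ := Multiset.mem_map.mp ha
    exact R.inner_pos_of_dominant hdom (hall b hb)

/-! ### Order lemmas -/

lemma gt_trans' {x y z : V} (h1 : R.Gt x y) (h2 : R.Gt y z) : R.Gt x z := by
  obtain ⟨m1, hm1, ha1, he1⟩ := h1
  obtain ⟨m2, hm2, ha2, he2⟩ := h2
  refine ⟨m1 + m2, ?_, ?_, ?_⟩
  · intro e
    have hc := congrArg Multiset.card e
    simp [Multiset.card_add] at hc
    exact hm1 hc.1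
  · intro a ha
    rcases Multiset.mem_add.mp ha with h | h
    · exact ha1 a h
    · exact ha2 a h
  · rw [Multiset.sum_add, ← he1, ← he2]; abel

lemma ell_sub_of_gt {x y : V} (h : R.Gt x y) : 1 ≤ R.ell x - R.ell y := by
  obtain ⟨m, hm, ha, he⟩ := h
  have : R.ell (x - y) = R.ell x - R.ell y := by rw [map_sub]
  rw [← this, he]
  exact R.one_le_ell_msum hm ha

lemma gt_irrefl' (x : V) : ¬ R.Gt x x := by
  intro h
  have := R.ell_sub_of_gt h
  simp at this
  linarith

lemma ge_refl (x : V) : R.Ge x x := Or.inr rfl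

lemma gt_of_ge_of_gt {x y z : V} (h1 : R.Ge x y) (h2 : R.Gt y z) : R.Gt x z := by
  rcases h1 with h | rfl
  · exact R.gt_trans' h h2
  · exact h2

lemma gt_of_gt_of_ge {x y z : V} (h1 : R.Gt x y) (h2 : R.Ge y z) : R.Gt x z := by
  rcases h2 with h | rfl
  · exact R.gt_trans' h1 h
  · exact h1

lemma ge_trans' {x y z : V} (h1 : R.Ge x y) (h2 : R.Ge y z) : R.Ge x z := by
  rcases h1 with h | rfl
  · exact Or.inl (R.gt_of_gt_of_ge h h2)
  · exact h2

lemma gt_single {x y : V} (h : x - y ∈ R.pos) : R.Gt x y := by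
  refine ⟨{x - y}, by simp, by simp [h], by simp⟩

/-! ### Root difference lemmas -/

lemma inner_self_pos'' {w : V} (h : w ≠ 0) : (0:ℝ) < ⟪w, w⟫ := by
  have h1 : (⟪w, w⟫:ℝ) = ‖w‖ ^ 2 := real_inner_self_eq_norm_sq w
  rw [h1]
  exact pow_pos (norm_pos_iff.mpr h) 2

lemma sub_mem_roots {x y : V} (hx : x ∈ R.roots) (hy : y ∈ R.roots) (hne : x ≠ y)
    (hne2 : x ≠ -y) (hpos : (0:ℝ) < ⟪x, y⟫) : x - y ∈ R.roots := by
  obtain ⟨n, hn⟩ := R.crystallographic x hx y hy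
  obtain ⟨p, hp⟩ := R.crystallographic y hy x hx
  have ha : (0:ℝ) < ⟪x, x⟫ := R.inner_self_pos_of_root hx
  have hb : (0:ℝ) < ⟪y, y⟫ := R.inner_self_pos_of_root hy
  have hyx : (⟪y, x⟫ : ℝ) = ⟪x, y⟫ := real_inner_comm x y
  rw [hyx] at hp
  have hn1 : 1 ≤ n := by
    by_contra hc
    push_neg at hc
    have hn0 : (n:ℝ) ≤ 0 := by exact_mod_cast (by omega : n ≤ (0:ℤ))
    nlinarith
  have hp1 : 1 ≤ p := by
    by_contra hc
    push_neg at hc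
    have hp0 : (p:ℝ) ≤ 0 := by exact_mod_cast (by omega : p ≤ (0:ℤ))
    nlinarith
  have hcs : (⟪x, y⟫:ℝ) * ⟪x, y⟫ < ⟪x, x⟫ * ⟪y, y⟫ := by
    set w := (⟪y, y⟫:ℝ) • x - (⟪x, y⟫:ℝ) • y with hw
    have hwne : w ≠ 0 := by
      intro e
      have he2 : (⟪y, y⟫:ℝ) • x = (⟪x, y⟫:ℝ) • y := sub_eq_zero.mp e
      have hbne : (⟪y, y⟫:ℝ) ≠ 0 := ne_of_gt hb
      have hx_eq : x = ((⟪x, y⟫:ℝ) / ⟪y, y⟫) • y := by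
        have h3 : (⟪y, y⟫:ℝ)⁻¹ • ((⟪y, y⟫:ℝ) • x) = (⟪y, y⟫:ℝ)⁻¹ • ((⟪x, y⟫:ℝ) • y) := by
          rw [he2]
        rw [smul_smul, smul_smul, inv_mul_cancel₀ hbne, one_smul] at h3
        rw [div_eq_inv_mul]
        exact h3
      have hroot : ((⟪x, y⟫:ℝ) / ⟪y, y⟫) • y ∈ R.roots := hx_eq ▸ hx
      rcases R.reduced y hy _ hroot with h1 | h1
      · apply hne; rw [hx_eq, h1, one_smul]
      · apply hne2; rw [hx_eq, h1, neg_one_smul]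
    have hww := inner_self_pos'' hwne
    have hexp : (⟪w, w⟫:ℝ)
        = ⟪y, y⟫ * ⟪y, y⟫ * ⟪x, x⟫ - ⟪y, y⟫ * (⟪x, y⟫ * ⟪x, y⟫) := by
      rw [hw]
      rw [inner_sub_left, inner_sub_right, inner_sub_right]
      rw [real_inner_smul_left, real_inner_smul_left, real_inner_smul_left,
        real_inner_smul_left]
      rw [real_inner_smul_right, real_inner_smul_right, real_inner_smul_right,
        real_inner_smul_right]
      rw [real_inner_comm y x]
      ring
    rw [hexp] at hww
    nlinarith
  have hnp : n * p ≤ 3 := by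
    by_contra hc
    push_neg at hc
    have h4 : (4:ℝ) ≤ ((n * p : ℤ) : ℝ) := by exact_mod_cast (by omega : (4:ℤ) ≤ n * p)
    push_cast at h4
    nlinarith
  have hcase : n = 1 ∨ p = 1 := by
    by_contra hc
    push_neg at hc
    have h1 : 2 ≤ n := by omega
    have h2 : 2 ≤ p := by omega
    nlinarith
  rcases hcase with h1 | h1
  · have h2 := R.reflect_mem y hy x hx
    have hco : (2 * ⟪x, y⟫ / ⟪y, y⟫ : ℝ) = 1 := by
      rw [hn, h1]
      push_cast
      field_simp
    rw [hco, one_smul] at h2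
    exact h2
  · have h2 := R.reflect_mem x hx y hy
    have hco : (2 * ⟪y, x⟫ / ⟪x, x⟫ : ℝ) = 1 := by
      rw [hyx, hp, h1]
      push_cast
      field_simp
    rw [hco, one_smul] at h2
    have := R.neg_mem_roots h2
    rwa [neg_sub] at this

lemma pos_sub_cases {x γ : V} (hx : x ∈ R.pos) (hγ : γ ∈ R.pos) (hne : x ≠ γ)
    (hpos : (0:ℝ) < ⟪x, γ⟫) : x - γ ∈ R.pos ∨ γ - x ∈ R.pos := by
  have hne2 : x ≠ -γ := by
    intro e
    rw [e, inner_neg_left] at hpos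
    have := R.inner_self_pos_of_root (R.pos_subset hγ)
    linarith
  have hroot := R.sub_mem_roots (R.pos_subset hx) (R.pos_subset hγ) hne hne2 hpos
  rcases R.mem_pos_or_neg_mem_pos _ hroot with h | h
  · exact Or.inl h
  · right
    rwa [neg_sub] at h

end RootSystemData

namespace RootSystemData

open Finset

variable {V : Type} [NormedAddCommGroup V] [InnerProductSpace ℝ V]
variable (R : RootSystemData V)

/-- A downward closed set of positive roots. -/
def IsIdeal (L : Set V) : Prop :=
  L ⊆ (R.pos : Set V) ∧ ∀ γ ∈ L, ∀ β ∈ (R.pos : Set V), R.Gt γ β → β ∈ L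

lemma toMultiset_coords_sum {δ : V} (h : δ ∈ R.pos) :
    (Finsupp.toMultiset (R.coords δ)).sum = δ := by
  rw [Finsupp.sum_toMultiset]
  have he := (R.coords_spec h).2
  conv_rhs => rw [he]
  exact Finsupp.sum_congr (fun a _ => (Nat.cast_smul_eq_nsmul ℝ _ _).symm)

lemma toMultiset_coords_mem {δ : V} (h : δ ∈ R.pos) :
    ∀ a ∈ Finsupp.toMultiset (R.coords δ), a ∈ R.simples := by
  intro a ha
  rw [Finsupp.mem_toMultiset] at ha
  exact_mod_cast (R.coords_spec h).1 ha

/-- The core combinatorial lemma: if a multiset `X` of positive roots outside a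
downward closed set `L`, plus a multiset `N` of simple roots, has the same sum
as a multiset `Y` of elements of `L`, then `X` is empty or strictly smaller
than `Y`. -/
lemma core_P {L : Set V} (hL : R.IsIdeal L) :
    ∀ n : ℕ, ∀ X Y N : Multiset V,
      (∀ x ∈ X, x ∈ R.pos ∧ x ∉ L) → (∀ y ∈ Y, y ∈ L) → (∀ a ∈ N, a ∈ R.simples) →
      X.sum + N.sum = Y.sum → (Y.map R.height).sum = n →
      X = 0 ∨ Multiset.card X < Multiset.card Y := by
  classical
  intro n
  induction n using Nat.strong_induction_on with
  | _ n IH =>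
  intro X Y N hX hY hN heq hmeas
  by_cases hX0 : X = 0
  · exact Or.inl hX0
  right
  -- find a positively paired (z, γ)
  have hZne : X + N ≠ 0 := by
    intro e
    have hc := congrArg Multiset.card e
    simp [Multiset.card_add] at hc
    exact hX0 hc.1
  have hZpos : ∀ z ∈ X + N, z ∈ R.pos := by
    intro z hz
    rcases Multiset.mem_add.mp hz with h | h
    · exact (hX z h).1
    · exact R.simples_subset (hN z h)
  have hYsum_ne : Y.sum ≠ 0 := by
    intro e
    have h1 := R.ell_msum_pos hZne hZpos
    rw [Multiset.sum_add, heq, e] at h1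
    simp at h1
  have hXY : (0:ℝ) < ⟪(X + N).sum, Y.sum⟫ := by
    rw [Multiset.sum_add, heq]
    exact inner_self_pos'' hYsum_ne
  obtain ⟨z, hzZ, hz⟩ : ∃ z ∈ X + N, (0:ℝ) < ⟪z, Y.sum⟫ := by
    apply exists_pos_of_msum_pos
    rw [← inner_msum_left]
    exact hXY
  obtain ⟨γ, hγY, hzγ⟩ : ∃ γ ∈ Y, (0:ℝ) < ⟪z, γ⟫ := by
    apply exists_pos_of_msum_pos
    rw [← inner_msum_right]
    exact hz
  have hγL : γ ∈ L := hY γ hγY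
  have hγpos : γ ∈ R.pos := hL.1 hγL
  have hYs : Y.sum = γ + (Y.erase γ).sum := by
    conv_lhs => rw [← Multiset.cons_erase hγY]
    rw [Multiset.sum_cons]
  have hmY : n = R.height γ + ((Y.erase γ).map R.height).sum := by
    rw [← hmeas]
    conv_lhs => rw [← Multiset.cons_erase hγY]
    rw [Multiset.map_cons, Multiset.sum_cons]
  have hYcard : 1 ≤ Multiset.card Y := by
    have := Multiset.card_pos.mpr (show Y ≠ 0 by intro e; rw [e] at hγY; simp at hγY)
    omega
  have hYecard : Multiset.card (Y.erase γ) = Multiset.card Y - 1 :=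
    Multiset.card_erase_of_mem hγY
  rcases Multiset.mem_add.mp hzZ with hzX | hzN
  · -- z ∈ X
    have hzI := hX z hzX
    have hzne : z ≠ γ := fun e => hzI.2 (e ▸ hγL)
    have hXs : X.sum = z + (X.erase z).sum := by
      conv_lhs => rw [← Multiset.cons_erase hzX]
      rw [Multiset.sum_cons]
    have hXcard : 1 ≤ Multiset.card X := by
      have := Multiset.card_pos.mpr hX0
      omega
    have hXecard : Multiset.card (X.erase z) = Multiset.card X - 1 :=
      Multiset.card_erase_of_mem hzX
    rcases R.pos_sub_cases hzI.1 hγpos hzne hzγ with hδ | hη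
    · -- z - γ ∈ pos
      have hzsub : z = γ + (z - γ) := (add_sub_cancel γ z).symm
      by_cases hδL : (z - γ) ∈ L
      · -- A3b : fold z - γ into the simples part
        have hNsum : (N + Finsupp.toMultiset (R.coords (z - γ))).sum
            = N.sum + (z - γ) := by
          rw [Multiset.sum_add, R.toMultiset_coords_sum hδ]
        have heq' : (X.erase z).sum + (N + Finsupp.toMultiset (R.coords (z - γ))).sum
            = (Y.erase γ).sum := by
          have h5 : (X.erase z).sum + (N + Finsupp.toMultiset (R.coords (z - γ))).sum
              - (Y.erase γ).sum = X.sum + N.sum - Y.sum := by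
            rw [hNsum, hXs, hYs]
            abel
          rw [heq, sub_self] at h5
          exact sub_eq_zero.mp h5
        have hmeas' : ((Y.erase γ).map R.height).sum < n := by
          have := R.one_le_height hγpos
          omega
        rcases IH _ hmeas' (X.erase z) (Y.erase γ)
            (N + Finsupp.toMultiset (R.coords (z - γ)))
            (fun x hx => hX x (Multiset.mem_of_mem_erase hx))
            (fun y hy => hY y (Multiset.mem_of_mem_erase hy))
            (by
              intro a ha
              rcases Multiset.mem_add.mp ha with h | h
              · exact hN a h
              · exact R.toMultiset_coords_mem hδ a h)
            heq' rfl with h | h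
        · -- X.erase z = 0 : then card X = 1, and Y.erase γ is nonempty
          have hXe : Multiset.card X = 1 := by
            have h9 : Multiset.card (X.erase z) = 0 := by rw [h]; rfl
            omega
          have hYene : (Y.erase γ) ≠ 0 := by
            intro e
            have h6 : (0:ℝ) < R.ell ((N + Finsupp.toMultiset (R.coords (z - γ))).sum) := by
              rw [hNsum, map_add]
              have h7 := R.ell_msum_nonneg (m := N) (fun a ha => R.simples_subset (hN a ha))
              have h8 := R.ell_root_pos hδ
              linarith
            have h9 : (N + Finsupp.toMultiset (R.coords (z - γ))).sum = 0 := by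
              have h10 := heq'
              rw [h, e] at h10
              simpa using h10
            rw [h9] at h6
            simp at h6
          have : 1 ≤ Multiset.card (Y.erase γ) := by
            have := Multiset.card_pos.mpr hYene
            omega
          omega
        · omega
      · -- A3a : z - γ stays in X
        have heq' : ((z - γ) ::ₘ X.erase z).sum + N.sum = (Y.erase γ).sum := by
          have h5 : ((z - γ) ::ₘ X.erase z).sum + N.sum - (Y.erase γ).sum
              = X.sum + N.sum - Y.sum := by
            rw [Multiset.sum_cons, hXs, hYs]
            abel
          rw [heq, sub_self] at h5
          exact sub_eq_zero.mp h5
        have hmeas' : ((Y.erase γ).map R.height).sum < n := by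
          have := R.one_le_height hγpos
          omega
        rcases IH _ hmeas' ((z - γ) ::ₘ X.erase z) (Y.erase γ) N
            (by
              intro x hx
              rcases Multiset.mem_cons.mp hx with h | h
              · exact h ▸ ⟨hδ, hδL⟩
              · exact hX x (Multiset.mem_of_mem_erase h))
            (fun y hy => hY y (Multiset.mem_of_mem_erase hy))
            hN heq' rfl with h | h
        · exact absurd h (Multiset.cons_ne_zero)
        · have : Multiset.card ((z - γ) ::ₘ X.erase z) = Multiset.card X := by
            rw [Multiset.card_cons, hXecard]
            omega
          omega
    · -- γ - z ∈ pos : contradiction, z would be in L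
      have hzL : z ∈ L := hL.2 γ hγL z (Finset.mem_coe.mpr hzI.1) (R.gt_single hη)
      exact absurd hzL hzI.2
  · -- z ∈ N
    have hzs : z ∈ R.simples := hN z hzN
    have hzpos : z ∈ R.pos := R.simples_subset hzs
    have hNs : N.sum = z + (N.erase z).sum := by
      conv_lhs => rw [← Multiset.cons_erase hzN]
      rw [Multiset.sum_cons]
    by_cases hzeq : z = γ
    · -- B1 : cancel z with γ
      have heq' : X.sum + (N.erase z).sum = (Y.erase γ).sum := by
        have h5 : X.sum + (N.erase z).sum - (Y.erase γ).sum = X.sum + N.sum - Y.sum := by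
          rw [hNs, hYs, hzeq]
          abel
        rw [heq, sub_self] at h5
        exact sub_eq_zero.mp h5
      have hmeas' : ((Y.erase γ).map R.height).sum < n := by
        have := R.one_le_height hγpos
        omega
      rcases IH _ hmeas' X (Y.erase γ) (N.erase z) hX
          (fun y hy => hY y (Multiset.mem_of_mem_erase hy))
          (fun a ha => hN a (Multiset.mem_of_mem_erase ha))
          heq' rfl with h | h
      · exact absurd h hX0
      · omega
    · rcases R.pos_sub_cases hzpos hγpos hzeq hzγ with hδ | hη
      · -- z - γ ∈ pos : impossible since z is simple
        have hzsub : z = γ + (z - γ) := (add_sub_cancel γ z).symm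
        have hha := R.height_add hγpos hδ (by rw [← hzsub]; exact hzpos)
        rw [← hzsub] at hha
        have h1 := R.height_simple hzs
        have h2 := R.one_le_height hγpos
        have h3 := R.one_le_height hδ
        omega
      · -- B2 : replace γ by γ - z in Y and remove z from N
        have hηL : (γ - z) ∈ L := by
          apply hL.2 γ hγL (γ - z) (Finset.mem_coe.mpr hη)
          apply R.gt_single
          have : γ - (γ - z) = z := by abel
          rw [this]
          exact hzpos
        have heq' : X.sum + (N.erase z).sum = ((γ - z) ::ₘ Y.erase γ).sum := by
          have h5 : X.sum + (N.erase z).sum - ((γ - z) ::ₘ Y.erase γ).sum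
              = X.sum + N.sum - Y.sum := by
            rw [Multiset.sum_cons, hNs, hYs]
            abel
          rw [heq, sub_self] at h5
          exact sub_eq_zero.mp h5
        have hhadd : R.height γ = R.height (γ - z) + 1 := by
          have hγsub : γ = (γ - z) + z := by abel
          have := R.height_add hη hzpos (by rw [← hγsub]; exact hγpos)
          rw [← hγsub] at this
          rw [this, R.height_simple hzs]
        have hmeas' : (((γ - z) ::ₘ Y.erase γ).map R.height).sum < n := by
          rw [Multiset.map_cons, Multiset.sum_cons]
          omega
        rcases IH _ hmeas' X ((γ - z) ::ₘ Y.erase γ) (N.erase z) hX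
            (by
              intro y hy
              rcases Multiset.mem_cons.mp hy with h | h
              · exact h ▸ hηL
              · exact hY y (Multiset.mem_of_mem_erase h))
            (fun a ha => hN a (Multiset.mem_of_mem_erase ha))
            heq' rfl with h | h
        · exact absurd h hX0
        · have : Multiset.card ((γ - z) ::ₘ Y.erase γ) = Multiset.card Y := by
            rw [Multiset.card_cons, hYecard]
            omega
          omega

end RootSystemData

namespace RootSystemData

open Finset

variable {V : Type} [NormedAddCommGroup V] [InnerProductSpace ℝ V]
variable (R : RootSystemData V)

/-- The finite set of vectors used in the separation argument. -/
def sepSet (L : Set V) : Set V :=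
  (R.simples : Set V) ∪ {v | ∃ β, β ∈ R.pos ∧ β ∉ L ∧ ∃ γ, γ ∈ L ∧ v = β - γ}

lemma sepSet_finite {L : Set V} (hL : R.IsIdeal L) : (R.sepSet L).Finite := by
  apply Set.Finite.union (R.simples.finite_toSet)
  apply Set.Finite.subset (Set.Finite.image (fun p : V × V => p.1 - p.2)
    (Set.Finite.prod (R.pos.finite_toSet) (R.pos.finite_toSet)))
  rintro v ⟨β, hβ, _, γ, hγ, rfl⟩
  exact ⟨(β, γ), ⟨by exact_mod_cast hβ, by exact_mod_cast hL.1 hγ⟩, rfl⟩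

lemma zero_not_mem_hull {L : Set V} (hL : R.IsIdeal L) :
    (0 : V) ∉ convexHull ℝ (R.sepSet L) := by
  classical
  intro h0
  rw [convexHull_eq_union] at h0
  simp only [Set.mem_iUnion] at h0
  obtain ⟨t, hts, hai, hmem⟩ := h0
  rw [Finset.convexHull_eq] at hmem
  obtain ⟨w, hw0, hw1, hwc⟩ := hmem
  rw [Finset.centerMass_eq_of_sum_1 _ _ hw1] at hwc
  simp only [id] at hwc
  -- classify the elements of t
  have hsplit : ∀ i : {x // x ∈ t}, ∃ bg : V × V,
      ((i : V) ∈ R.simples ∧ bg.1 = 0 ∧ bg.2 = 0) ∨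
      (bg.1 ∈ R.pos ∧ bg.1 ∉ L ∧ bg.2 ∈ L ∧ (i : V) = bg.1 - bg.2) := by
    intro i
    have hi : (i : V) ∈ R.sepSet L := hts i.2
    rcases hi with h | h
    · exact ⟨(0, 0), Or.inl ⟨by exact_mod_cast h, rfl, rfl⟩⟩
    · obtain ⟨β, hβ, hβL, γ, hγ, hv⟩ := h
      exact ⟨(β, γ), Or.inr ⟨hβ, hβL, hγ, hv⟩⟩
  choose bg hbg using hsplit
  -- integer coordinates of the elements of t
  set zfun : {x // x ∈ t} → V → ℤ := fun i α =>
    if (bg i).1 = 0 then (if α = (i : V) then 1 else 0)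
    else ((R.coords ((bg i).1)) α : ℤ) - ((R.coords ((bg i).2)) α : ℤ) with hzfun
  have hreal : ∀ i : {x // x ∈ t}, ((i : V)) = ∑ α ∈ R.simples, (zfun i α : ℝ) • α := by
    intro i
    rcases hbg i with ⟨hs, hb0, _⟩ | ⟨hb, _, hg, hv⟩
    · rw [hzfun]
      simp only [if_pos hb0]
      rw [Finset.sum_congr rfl (fun α (_ : α ∈ R.simples) => by
        rw [show (((if α = (i:V) then (1:ℤ) else 0) : ℤ) : ℝ) • α
          = (if α = (i:V) then α else (0:V)) from by split <;> simp])]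
      rw [show (∑ α ∈ R.simples, if α = (i:V) then α else (0:V))
          = ∑ α ∈ R.simples, if (i:V) = α then α else (0:V) from
        Finset.sum_congr rfl (fun α _ => by simp [eq_comm])]
      rw [Finset.sum_ite_eq R.simples ((i:V)) (fun α => α)]
      rw [if_pos hs]
    · have hbne : (bg i).1 ≠ 0 := R.pos_ne_zero hb
      rw [hzfun]
      simp only [if_neg hbne]
      rw [hv]
      conv_lhs => rw [(R.coords_spec hb).2, (R.coords_spec (hL.1 hg)).2]
      rw [R.sum_coord_eq (R.coords_spec hb).1, R.sum_coord_eq (R.coords_spec (hL.1 hg)).1]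
      rw [← Finset.sum_sub_distrib]
      apply Finset.sum_congr rfl
      intro α _
      push_cast
      rw [sub_smul]
  -- the real linear relations
  have h0' : ∑ i : {x // x ∈ t}, w (i : V) • ((i : V)) = 0 := by
    rw [Finset.sum_coe_sort t (fun y => w y • y)]
    exact hwc
  have hsum1 : ∑ i : {x // x ∈ t}, w (i : V) = 1 := by
    rw [Finset.sum_coe_sort t (fun y => w y)]
    exact hw1
  have hcoord : ∀ α ∈ R.simples, ∑ i : {x // x ∈ t}, (zfun i α : ℝ) * w (i : V) = 0 := by
    have h3 : ∀ i : {x // x ∈ t}, w (i : V) • ((i : V))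
        = ∑ α ∈ R.simples, ((zfun i α : ℝ) * w (i : V)) • α := by
      intro i
      have h3a : ∀ α ∈ R.simples, ((zfun i α : ℝ) * w (i : V)) • α
          = w (i : V) • ((zfun i α : ℝ) • α) := fun α _ => by rw [smul_smul, mul_comm]
      rw [Finset.sum_congr rfl h3a, ← Finset.smul_sum, ← hreal i]
    have h2 : ∑ α ∈ R.simples, (∑ i : {x // x ∈ t}, (zfun i α : ℝ) * w (i : V)) • α = 0 := by
      rw [← h0', Finset.sum_congr rfl (fun i (_ : i ∈ Finset.univ) => h3 i), Finset.sum_comm]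
      apply Finset.sum_congr rfl
      intro α _
      rw [Finset.sum_smul]
    exact R.simples_coeff_eq_zero h2
  -- the Gram matrix
  set G : Matrix {x // x ∈ t} {x // x ∈ t} ℚ := fun i j =>
    ((∑ α ∈ R.simples, zfun i α * zfun j α : ℤ) : ℚ) + 1 with hG
  set GR : Matrix {x // x ∈ t} {x // x ∈ t} ℝ := G.map (fun q : ℚ => (q : ℝ)) with hGR
  have hGRentry : ∀ i j, GR i j = (∑ α ∈ R.simples, (zfun i α : ℝ) * (zfun j α : ℝ)) + 1 := by
    intro i j
    rw [hGR, Matrix.map_apply, hG]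
    push_cast
    rfl
  set wR : {x // x ∈ t} → ℝ := fun i => w (i : V) with hwR
  have hGw : GR.mulVec wR = fun _ => (1 : ℝ) := by
    funext i
    show ∑ j, GR i j * wR j = 1
    have h4 : ∀ j, GR i j * wR j
        = (∑ α ∈ R.simples, (zfun i α : ℝ) * ((zfun j α : ℝ) * wR j)) + wR j := by
      intro j
      rw [hGRentry, add_mul, one_mul, Finset.sum_mul]
      congr 1
      apply Finset.sum_congr rfl
      intro α _
      ring
    rw [Finset.sum_congr rfl (fun j (_ : j ∈ Finset.univ) => h4 j), Finset.sum_add_distrib,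
      Finset.sum_comm]
    have h5 : ∀ α ∈ R.simples,
        ∑ j : {x // x ∈ t}, (zfun i α : ℝ) * ((zfun j α : ℝ) * wR j) = 0 := by
      intro α hα
      rw [← Finset.mul_sum]
      rw [show ∑ j : {x // x ∈ t}, (zfun j α : ℝ) * wR j = 0 from hcoord α hα]
      ring
    rw [Finset.sum_congr rfl h5, Finset.sum_const_zero, zero_add, hsum1]
  -- injectivity of the Gram matrix over ℝ
  have hGinj : ∀ u : {x // x ∈ t} → ℝ, GR.mulVec u = 0 → u = 0 := by
    intro u hu
    have hq : ∑ i, u i * (GR.mulVec u i) = 0 := by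
      rw [show GR.mulVec u = 0 from hu]
      simp
    have hper : ∀ i j, u i * (GR i j * u j)
        = (∑ α ∈ R.simples, (u i * (zfun i α : ℝ)) * (u j * (zfun j α : ℝ))) + u i * u j := by
      intro i j
      rw [hGRentry, add_mul, one_mul, mul_add]
      congr 1
      rw [Finset.sum_mul, Finset.mul_sum]
      exact Finset.sum_congr rfl (fun α _ => by ring)
    have key : ∑ i, u i * (GR.mulVec u i)
        = (∑ α ∈ R.simples, (∑ i, u i * (zfun i α : ℝ)) * (∑ i, u i * (zfun i α : ℝ)))
          + (∑ i, u i) * (∑ i, u i) := by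
      have h6 : ∑ i, u i * GR.mulVec u i = ∑ i, ∑ j, u i * (GR i j * u j) := by
        apply Finset.sum_congr rfl
        intro i _
        rw [show GR.mulVec u i = ∑ j, GR i j * u j from rfl, Finset.mul_sum]
      rw [h6]
      rw [Finset.sum_congr rfl
        (fun i (_ : i ∈ Finset.univ) => Finset.sum_congr rfl
          (fun j (_ : j ∈ Finset.univ) => hper i j))]
      rw [Finset.sum_congr rfl (fun i (_ : i ∈ Finset.univ) => Finset.sum_add_distrib)]
      rw [Finset.sum_add_distrib]
      congr 1
      · rw [Finset.sum_congr rfl (fun i (_ : i ∈ Finset.univ) => Finset.sum_comm)]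
        rw [Finset.sum_comm]
        apply Finset.sum_congr rfl
        intro α _
        rw [Finset.sum_mul_sum]
      · rw [Finset.sum_mul_sum]
    rw [key] at hq
    have hTnn : (0:ℝ) ≤ (∑ i, u i) * (∑ i, u i) := mul_self_nonneg _
    have hSnn : ∀ α ∈ R.simples,
        (0:ℝ) ≤ (∑ i, u i * (zfun i α : ℝ)) * (∑ i, u i * (zfun i α : ℝ)) :=
      fun α _ => mul_self_nonneg _
    have hSsum : (0:ℝ) ≤ ∑ α ∈ R.simples,
        (∑ i, u i * (zfun i α : ℝ)) * (∑ i, u i * (zfun i α : ℝ)) :=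
      Finset.sum_nonneg hSnn
    have hT : ∑ i, u i = 0 := by nlinarith [hq, hSsum, hTnn]
    have hS : ∀ α ∈ R.simples, ∑ i, u i * (zfun i α : ℝ) = 0 := by
      have hzero : ∑ α ∈ R.simples,
          (∑ i, u i * (zfun i α : ℝ)) * (∑ i, u i * (zfun i α : ℝ)) = 0 := by nlinarith
      intro α hα
      exact mul_self_eq_zero.mp ((Finset.sum_eq_zero_iff_of_nonneg hSnn).mp hzero α hα)
    -- affine independence concludes
    have hgoal : ∑ i : {x // x ∈ t}, u i • ((i : V)) = 0 := by
      have h7 : ∀ i : {x // x ∈ t}, u i • ((i : V))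
          = ∑ α ∈ R.simples, (u i * (zfun i α : ℝ)) • α := by
        intro i
        conv_lhs => rw [hreal i]
        rw [Finset.smul_sum]
        exact Finset.sum_congr rfl (fun α _ => by rw [smul_smul])
      rw [Finset.sum_congr rfl (fun i (_ : i ∈ Finset.univ) => h7 i), Finset.sum_comm]
      apply Finset.sum_eq_zero
      intro α hα
      rw [← Finset.sum_smul, hS α hα, zero_smul]
    have haff := affineIndependent_iff.mp hai Finset.univ u hT hgoal
    funext i
    exact haff i (Finset.mem_univ i)
  -- the Gram matrix is invertible over ℚ
  have hdetR : GR.det ≠ 0 := by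
    intro hdet
    obtain ⟨v, hv0, hv⟩ := Matrix.exists_mulVec_eq_zero_iff.mpr hdet
    exact hv0 (hGinj v hv)
  have hdetQ : G.det ≠ 0 := by
    intro h
    apply hdetR
    have h8 : GR = (Rat.castHom ℝ).mapMatrix G := by
      rw [RingHom.mapMatrix_apply, hGR]
      rfl
    rw [h8, ← RingHom.map_det, h]
    simp
  have hunit : IsUnit G.det := isUnit_iff_ne_zero.mpr hdetQ
  set wQ : {x // x ∈ t} → ℚ := G⁻¹.mulVec (fun _ => (1 : ℚ)) with hwQ
  have hGwQ : G.mulVec wQ = (fun _ => (1 : ℚ)) := by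
    rw [hwQ, Matrix.mulVec_mulVec, Matrix.mul_nonsing_inv _ hunit, Matrix.one_mulVec]
  have hcast : GR.mulVec (fun i => ((wQ i : ℚ) : ℝ)) = fun _ => (1 : ℝ) := by
    funext i
    have h9 := congrFun hGwQ i
    show ∑ j, GR i j * ((wQ j : ℚ) : ℝ) = 1
    have h10 : ∑ j, G i j * wQ j = 1 := h9
    have h12 : ∑ j, GR i j * ((wQ j : ℚ) : ℝ) = ((∑ j, G i j * wQ j : ℚ) : ℝ) := by
      simp only [hGR, Matrix.map_apply]
      push_cast
      rfl
    rw [h12, h10, Rat.cast_one]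
  have hwEq : wR = fun i => ((wQ i : ℚ) : ℝ) := by
    have hsub : GR.mulVec (wR - fun i => ((wQ i : ℚ) : ℝ)) = 0 := by
      rw [Matrix.mulVec_sub, hGw, hcast]
      simp
    have h13 := hGinj _ hsub
    funext i
    have h14 := congrFun h13 i
    simp only [Pi.sub_apply, Pi.zero_apply, sub_eq_zero] at h14
    exact h14
  have hwQ0 : ∀ i, 0 ≤ wQ i := by
    intro i
    have h15 : (0:ℝ) ≤ ((wQ i : ℚ) : ℝ) := by
      rw [← congrFun hwEq i]
      exact hw0 _ i.2
    exact_mod_cast h15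
  have hQsum1 : ∑ i, wQ i = 1 := by
    have h16 : ∑ i : {x // x ∈ t}, ((wQ i : ℚ) : ℝ) = 1 := by
      rw [Finset.sum_congr rfl (fun i (_ : i ∈ Finset.univ) => (congrFun hwEq i).symm)]
      exact hsum1
    exact_mod_cast h16
  -- clear denominators
  set D : ℕ := ∏ i : {x // x ∈ t}, (wQ i).den with hD
  have hD1 : 1 ≤ D := Nat.one_le_iff_ne_zero.mpr
    (Finset.prod_ne_zero_iff.mpr (fun i _ => (wQ i).den_nz))
  have hnat : ∀ i : {x // x ∈ t}, ∃ k : ℕ, (k : ℚ) = wQ i * D := by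
    intro i
    obtain ⟨k, hk⟩ := Finset.dvd_prod_of_mem (fun j : {x // x ∈ t} => (wQ j).den)
      (Finset.mem_univ i)
    have hden : ((wQ i).den : ℚ) ≠ 0 := by exact_mod_cast (wQ i).den_nz
    have hq : wQ i * ((wQ i).den : ℚ) = ((wQ i).num : ℚ) := by
      have h30 : (((wQ i).num : ℚ) / ((wQ i).den : ℚ)) * ((wQ i).den : ℚ)
          = ((wQ i).num : ℚ) := div_mul_cancel₀ _ hden
      rw [Rat.num_div_den (wQ i)] at h30
      exact h30
    have hnum0 : 0 ≤ (wQ i).num := Rat.num_nonneg.mpr (hwQ0 i)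
    refine ⟨(wQ i).num.toNat * k, ?_⟩
    have h17 : ((wQ i).num.toNat : ℚ) = ((wQ i).num : ℚ) := by
      exact_mod_cast congrArg (fun z : ℤ => (z : ℚ)) (Int.toNat_of_nonneg hnum0)
    have h18 : (D : ℚ) = ((wQ i).den : ℚ) * (k : ℚ) := by exact_mod_cast hk
    push_cast
    rw [h17, h18, ← mul_assoc, hq]
  choose mm hmm_ using hnat
  have hsum_m : ∑ i, (mm i : ℚ) = (D : ℚ) := by
    rw [Finset.sum_congr rfl (fun i (_ : i ∈ Finset.univ) => hmm_ i), ← Finset.sum_mul,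
      hQsum1, one_mul]
  have hsum_mN : ∑ i, mm i = D := by exact_mod_cast hsum_m
  have hmR : ∀ i, (mm i : ℝ) = (D : ℝ) * wR i := by
    intro i
    have h19 : ((mm i : ℚ) : ℝ) = ((wQ i * D : ℚ) : ℝ) := by
      exact_mod_cast congrArg (fun q : ℚ => (q : ℝ)) (hmm_ i)
    push_cast at h19
    rw [h19, congrFun hwEq i]
    ring
  have hcert : ∑ i : {x // x ∈ t}, (mm i : ℝ) • ((i : V)) = 0 := by
    rw [Finset.sum_congr rfl (fun i (_ : i ∈ Finset.univ) => by rw [hmR i, mul_smul])]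
    rw [← Finset.smul_sum]
    have h22 : ∑ i : {x // x ∈ t}, wR i • ((i : V)) = 0 := h0'
    rw [h22, smul_zero]
  -- build the multisets and contradict core_P
  have hMC : ∀ u : Finset {x // x ∈ t}, ∃ X Y N : Multiset V,
      (∀ x ∈ X, x ∈ R.pos ∧ x ∉ L) ∧ (∀ y ∈ Y, y ∈ L) ∧ (∀ a ∈ N, a ∈ R.simples) ∧
      Multiset.card X = Multiset.card Y ∧
      Multiset.card X + Multiset.card N = ∑ i ∈ u, mm i ∧
      X.sum + N.sum = Y.sum + ∑ i ∈ u, (mm i : ℝ) • ((i : V)) := by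
    intro u
    induction u using Finset.induction_on with
    | empty => exact ⟨0, 0, 0, by simp, by simp, by simp, by simp, by simp, by simp⟩
    | @insert a u hanotin ih =>
      obtain ⟨X, Y, N, h1, h2, h3, h4, h5, h6⟩ := ih
      rcases hbg a with ⟨hs, hb0, hg0⟩ | ⟨hb, hbL, hg, hv⟩
      · refine ⟨X, Y, N + Multiset.replicate (mm a) ((a : V)), h1, h2, ?_, h4, ?_, ?_⟩
        · intro x hx
          rcases Multiset.mem_add.mp hx with h | h
          · exact h3 x h
          · rw [Multiset.eq_of_mem_replicate h]
            exact hs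
        · rw [Multiset.card_add, Multiset.card_replicate, Finset.sum_insert hanotin]
          omega
        · rw [Multiset.sum_add, Multiset.sum_replicate, Finset.sum_insert hanotin]
          have h20 : X.sum + (N.sum + (mm a) • ((a : V)))
              - (Y.sum + ((mm a : ℝ) • ((a : V)) + ∑ i ∈ u, (mm i : ℝ) • ((i : V))))
              = X.sum + N.sum - (Y.sum + ∑ i ∈ u, (mm i : ℝ) • ((i : V))) := by
            rw [← Nat.cast_smul_eq_nsmul ℝ (mm a) ((a : V))]
            abel
          have h21 : X.sum + N.sum - (Y.sum + ∑ i ∈ u, (mm i : ℝ) • ((i : V))) = 0 := by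
            rw [h6]
            exact sub_self _
          rw [h21] at h20
          exact sub_eq_zero.mp h20
      · refine ⟨X + Multiset.replicate (mm a) ((bg a).1),
          Y + Multiset.replicate (mm a) ((bg a).2), N, ?_, ?_, h3, ?_, ?_, ?_⟩
        · intro x hx
          rcases Multiset.mem_add.mp hx with h | h
          · exact h1 x h
          · rw [Multiset.eq_of_mem_replicate h]
            exact ⟨hb, hbL⟩
        · intro y hy
          rcases Multiset.mem_add.mp hy with h | h
          · exact h2 y h
          · rw [Multiset.eq_of_mem_replicate h]
            exact hg
        · rw [Multiset.card_add, Multiset.card_add, Multiset.card_replicate,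
            Multiset.card_replicate]
          omega
        · rw [Multiset.card_add, Multiset.card_replicate, Finset.sum_insert hanotin]
          omega
        · rw [Multiset.sum_add, Multiset.sum_add, Multiset.sum_replicate, Multiset.sum_replicate,
            Finset.sum_insert hanotin]
          have h20 : (X.sum + (mm a) • ((bg a).1)) + N.sum
              - ((Y.sum + (mm a) • ((bg a).2))
                + ((mm a : ℝ) • ((a : V)) + ∑ i ∈ u, (mm i : ℝ) • ((i : V))))
              = X.sum + N.sum - (Y.sum + ∑ i ∈ u, (mm i : ℝ) • ((i : V))) := by
            rw [← Nat.cast_smul_eq_nsmul ℝ (mm a) ((bg a).1),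
              ← Nat.cast_smul_eq_nsmul ℝ (mm a) ((bg a).2), hv, smul_sub]
            abel
          have h21 : X.sum + N.sum - (Y.sum + ∑ i ∈ u, (mm i : ℝ) • ((i : V))) = 0 := by
            rw [h6]
            exact sub_self _
          rw [h21] at h20
          exact sub_eq_zero.mp h20
  obtain ⟨X, Y, N, h1, h2, h3, h4, h5, h6⟩ := hMC Finset.univ
  rw [hcert, add_zero] at h6
  rcases R.core_P hL _ X Y N h1 h2 h3 h6 rfl with h | h
  · have hY0 : Y = 0 := by
      rw [← Multiset.card_eq_zero, ← h4, h]
      rfl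
    rw [h, hY0] at h6
    simp only [Multiset.sum_zero, zero_add] at h6
    have hN0 : N ≠ 0 := by
      intro e
      rw [h, e] at h5
      simp only [Multiset.card_zero, add_zero] at h5
      rw [hsum_mN] at h5
      omega
    exact R.msum_ne_zero hN0 (fun a ha => R.simples_subset (h3 a ha)) h6
  · rw [h4] at h
    exact lt_irrefl _ h

end RootSystemData

namespace RootSystemData

open Finset

variable {V : Type} [NormedAddCommGroup V] [InnerProductSpace ℝ V]
variable (R : RootSystemData V)

lemma exists_region_point [FiniteDimensional ℝ V] {L : Set V} (hL : R.IsIdeal L) :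
    ∃ χ : V, (∀ α ∈ R.simples, (0:ℝ) < ⟪α, χ⟫) ∧ (∀ γ ∈ L, (⟪γ, χ⟫:ℝ) < 1) ∧
      (∀ β ∈ R.pos, β ∉ L → (1:ℝ) < ⟪β, χ⟫) := by
  classical
  have hfin := R.sepSet_finite hL
  have hclosed : IsClosed (convexHull ℝ (R.sepSet L)) :=
    (hfin.isCompact_convexHull (𝕜 := ℝ)).isClosed
  have hconv : Convex ℝ (convexHull ℝ (R.sepSet L)) := convex_convexHull ℝ _
  obtain ⟨f, u, hfu, hub⟩ :=
    geometric_hahn_banach_point_closed hconv hclosed (R.zero_not_mem_hull hL)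
  have hu0 : (0:ℝ) < u := by simpa using hfu
  have hfS : ∀ v ∈ R.sepSet L, u < f v := fun v hv => hub v (subset_convexHull ℝ _ hv)
  set χ0 : V := (InnerProductSpace.toDual ℝ V).symm f with hχ0
  have hχ0f : ∀ v : V, (⟪v, χ0⟫ : ℝ) = f v := by
    intro v
    rw [real_inner_comm]
    exact InnerProductSpace.toDual_symm_apply
  have hdom : ∀ α ∈ R.simples, (0:ℝ) < ⟪α, χ0⟫ := by
    intro α hα
    rw [hχ0f]
    exact lt_trans hu0 (hfS α (Or.inl (by exact_mod_cast hα)))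
  have hposf : ∀ β ∈ R.pos, (0:ℝ) < f β := by
    intro β hβ
    rw [← hχ0f]
    exact R.inner_pos_of_dominant hdom hβ
  have hsep : ∀ β ∈ R.pos, β ∉ L → ∀ γ ∈ L, f γ + u < f β := by
    intro β hβ hβL γ hγ
    have h1 := hfS (β - γ) (Or.inr ⟨β, hβ, hβL, γ, hγ, rfl⟩)
    rw [map_sub] at h1
    linarith
  -- scaling
  set LF : Finset V := R.pos.filter (· ∈ L) with hLF
  set IF : Finset V := R.pos.filter (· ∉ L) with hIF
  have hmemLF : ∀ γ, γ ∈ LF ↔ γ ∈ L := by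
    intro γ
    rw [hLF, Finset.mem_filter]
    constructor
    · exact fun h => h.2
    · exact fun h => ⟨hL.1 h, h⟩
  have hmemIF : ∀ β, β ∈ IF ↔ (β ∈ R.pos ∧ β ∉ L) := fun β => Finset.mem_filter
  -- pick a scale s
  have hmain : ∃ s : ℝ, 0 < s ∧ (∀ γ ∈ L, s * f γ < 1) ∧
      (∀ β ∈ R.pos, β ∉ L → 1 < s * f β) := by
    rcases eq_or_ne LF ∅ with hLe | hLne
    · rcases eq_or_ne IF ∅ with hIe | hIne
      · refine ⟨1, one_pos, ?_, ?_⟩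
        · intro γ hγ
          exact absurd ((hmemLF γ).mpr hγ) (by rw [hLe]; exact Finset.notMem_empty γ)
        · intro β hβ hβL
          exact absurd ((hmemIF β).mpr ⟨hβ, hβL⟩) (by rw [hIe]; exact Finset.notMem_empty β)
      · obtain ⟨βm, hβm, hβmin⟩ := Finset.exists_min_image IF f (Finset.nonempty_iff_ne_empty.mpr hIne)
        have hm0 : 0 < f βm := hposf βm ((hmemIF βm).mp hβm).1
        refine ⟨2 / f βm, by positivity, ?_, ?_⟩
        · intro γ hγ
          exact absurd ((hmemLF γ).mpr hγ) (by rw [hLe]; exact Finset.notMem_empty γ)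
        · intro β hβ hβL
          have h2 := hβmin β ((hmemIF β).mpr ⟨hβ, hβL⟩)
          have h3 : (2 / f βm) * f βm = 2 := by field_simp
          have h4 : (2 / f βm) * f βm ≤ (2 / f βm) * f β :=
            mul_le_mul_of_nonneg_left h2 (by positivity)
          linarith
    · obtain ⟨γM, hγM, hγmax⟩ := Finset.exists_max_image LF f (Finset.nonempty_iff_ne_empty.mpr hLne)
      have hM0 : 0 < f γM := hposf γM (hL.1 ((hmemLF γM).mp hγM))
      rcases eq_or_ne IF ∅ with hIe | hIne
      · refine ⟨1 / (2 * f γM), by positivity, ?_, ?_⟩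
        · intro γ hγ
          have h2 := hγmax γ ((hmemLF γ).mpr hγ)
          have h4 : (1 / (2 * f γM)) * f γ ≤ (1 / (2 * f γM)) * f γM :=
            mul_le_mul_of_nonneg_left h2 (by positivity)
          have h3 : (1 / (2 * f γM)) * f γM = 1 / 2 := by field_simp
          linarith
        · intro β hβ hβL
          exact absurd ((hmemIF β).mpr ⟨hβ, hβL⟩) (by rw [hIe]; exact Finset.notMem_empty β)
      · obtain ⟨βm, hβm, hβmin⟩ := Finset.exists_min_image IF f (Finset.nonempty_iff_ne_empty.mpr hIne)
        have hm0 : 0 < f βm := hposf βm ((hmemIF βm).mp hβm).1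
        have hMm : f γM < f βm := by
          have := hsep βm ((hmemIF βm).mp hβm).1 ((hmemIF βm).mp hβm).2 γM
            ((hmemLF γM).mp hγM)
          linarith
        have hden : 0 < f γM + f βm := by linarith
        refine ⟨2 / (f γM + f βm), by positivity, ?_, ?_⟩
        · intro γ hγ
          have h2 := hγmax γ ((hmemLF γ).mpr hγ)
          have h4 : (2 / (f γM + f βm)) * f γ ≤ (2 / (f γM + f βm)) * f γM :=
            mul_le_mul_of_nonneg_left h2 (by positivity)
          have h3 : (2 / (f γM + f βm)) * f γM < 1 := by
            rw [div_mul_eq_mul_div, div_lt_one hden]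
            linarith
          linarith
        · intro β hβ hβL
          have h2 := hβmin β ((hmemIF β).mpr ⟨hβ, hβL⟩)
          have h4 : (2 / (f γM + f βm)) * f βm ≤ (2 / (f γM + f βm)) * f β :=
            mul_le_mul_of_nonneg_left h2 (by positivity)
          have h3 : 1 < (2 / (f γM + f βm)) * f βm := by
            rw [div_mul_eq_mul_div, lt_div_iff₀ hden]
            linarith
          linarith
  obtain ⟨s, hs0, hsl, hsu⟩ := hmain
  refine ⟨s • χ0, ?_, ?_, ?_⟩
  · intro α hα
    rw [real_inner_smul_right]
    exact mul_pos hs0 (hdom α hα)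
  · intro γ hγ
    rw [real_inner_smul_right, hχ0f]
    exact hsl γ hγ
  · intro β hβ hβL
    rw [real_inner_smul_right, hχ0f]
    exact hsu β hβ hβL

end RootSystemData

namespace RootSystemData

open Finset

variable {V : Type} [NormedAddCommGroup V] [InnerProductSpace ℝ V]
variable (R : RootSystemData V)

/-! ### Convexity of the candidate region -/

lemma combo_lt {a b u v c : ℝ} (h1 : u < c) (h2 : v < c) (ha : 0 ≤ a) (hb : 0 ≤ b)
    (hab : a + b = 1) : a * u + b * v < c := by
  rcases eq_or_lt_of_le ha with h | h
  · have hb1 : b = 1 := by linarith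
    rw [← h, hb1]
    linarith
  · have k1 : a * u < a * c := mul_lt_mul_of_pos_left h1 h
    have k2 : b * v ≤ b * c := mul_le_mul_of_nonneg_left h2.le hb
    have k3 : a * c + b * c = c := by rw [← add_mul, hab, one_mul]
    linarith

lemma combo_gt {a b u v c : ℝ} (h1 : c < u) (h2 : c < v) (ha : 0 ≤ a) (hb : 0 ≤ b)
    (hab : a + b = 1) : c < a * u + b * v := by
  rcases eq_or_lt_of_le ha with h | h
  · have hb1 : b = 1 := by linarith
    rw [← h, hb1]
    linarith
  · have k1 : a * c < a * u := mul_lt_mul_of_pos_left h1 h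
    have k2 : b * c ≤ b * v := mul_le_mul_of_nonneg_left h2.le hb
    have k3 : a * c + b * c = c := by rw [← add_mul, hab, one_mul]
    linarith

/-- The candidate region attached to a set of positive roots. -/
def Creg (L : Set V) : Set V :=
  {χ | (∀ α ∈ R.simples, (0:ℝ) < ⟪α, χ⟫) ∧ (∀ γ ∈ L, (⟪γ, χ⟫:ℝ) < 1) ∧
    ∀ β ∈ R.pos, β ∉ L → (1:ℝ) < ⟪β, χ⟫}

lemma creg_convex (L : Set V) : Convex ℝ (R.Creg L) := by
  intro x hx y hy a b ha hb hab
  refine ⟨?_, ?_, ?_⟩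
  · intro α hα
    rw [inner_add_right, real_inner_smul_right, real_inner_smul_right]
    exact combo_gt (hx.1 α hα) (hy.1 α hα) ha hb hab
  · intro γ hγ
    rw [inner_add_right, real_inner_smul_right, real_inner_smul_right]
    exact combo_lt (hx.2.1 γ hγ) (hy.2.1 γ hγ) ha hb hab
  · intro β hβ hβL
    rw [inner_add_right, real_inner_smul_right, real_inner_smul_right]
    exact combo_gt (hx.2.2 β hβ hβL) (hy.2.2 β hβ hβL) ha hb hab

lemma creg_subset_chamber (L : Set V) : R.Creg L ⊆ R.chamberSet := by
  intro χ hχ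
  refine ⟨hχ.1, ?_⟩
  intro β hβ
  by_cases h : β ∈ L
  · exact ne_of_lt (hχ.2.1 β h)
  · exact (ne_of_lt (hχ.2.2 β hβ h)).symm

/-! ### Sign constancy on regions -/

lemma region_sign {F : Set V} (hF : R.IsRegion F) {β : V} (hβ : β ∈ R.pos) :
    (∀ χ ∈ F, (⟪β, χ⟫:ℝ) < 1) ∨ (∀ χ ∈ F, (1:ℝ) < ⟪β, χ⟫) := by
  obtain ⟨χ0, hχ0, hFeq⟩ := hF
  by_contra hcon
  push_neg at hcon
  obtain ⟨⟨χ1, hχ1, hv1⟩, χ2, hχ2, hv2⟩ := hcon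
  have hpc : IsPreconnected F := by
    rw [hFeq]
    exact isPreconnected_connectedComponentIn
  have himg : IsPreconnected ((fun χ => (⟪β, χ⟫:ℝ)) '' F) :=
    hpc.image _ (Continuous.inner continuous_const continuous_id).continuousOn
  have hIcc : Set.Icc (⟪β, χ2⟫:ℝ) (⟪β, χ1⟫:ℝ) ⊆ (fun χ => (⟪β, χ⟫:ℝ)) '' F :=
    himg.Icc_subset ⟨χ2, hχ2, rfl⟩ ⟨χ1, hχ1, rfl⟩
  obtain ⟨χ, hχF, hχval⟩ := hIcc ⟨hv2, hv1⟩
  have hsub : F ⊆ R.chamberSet := by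
    rw [hFeq]
    exact connectedComponentIn_subset _ _
  exact (hsub hχF).2 β hβ hχval

lemma region_nonempty {F : Set V} (hF : R.IsRegion F) : F.Nonempty := by
  obtain ⟨χ0, hχ0, hFeq⟩ := hF
  exact ⟨χ0, hFeq ▸ mem_connectedComponentIn hχ0⟩

lemma region_subset_chamber {F : Set V} (hF : R.IsRegion F) : F ⊆ R.chamberSet := by
  obtain ⟨χ0, hχ0, hFeq⟩ := hF
  rw [hFeq]
  exact connectedComponentIn_subset _ _

lemma mem_ltOne_or_gtOne {F : Set V} (hF : R.IsRegion F) {β : V} (hβ : β ∈ R.pos) :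
    β ∈ R.ltOne F ∨ β ∈ R.gtOne F := by
  rcases R.region_sign hF hβ with h | h
  · exact Or.inl ⟨hβ, h⟩
  · exact Or.inr ⟨hβ, h⟩

lemma not_ltOne_and_gtOne {F : Set V} (hF : R.IsRegion F) {β : V}
    (h1 : β ∈ R.ltOne F) (h2 : β ∈ R.gtOne F) : False := by
  obtain ⟨χ, hχ⟩ := R.region_nonempty hF
  have := h1.2 χ hχ
  have := h2.2 χ hχ
  linarith

lemma ltOne_ideal {F : Set V} (hF : R.IsRegion F) : R.IsIdeal (R.ltOne F) := by
  constructor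
  · intro β hβ
    exact_mod_cast hβ.1
  · intro γ hγ β hβ hgt
    refine ⟨by exact_mod_cast hβ, ?_⟩
    intro χ hχ
    obtain ⟨m, hm, hall, hsum⟩ := hgt
    have hβeq : β = γ - (γ - β) := by abel
    have hdom := (R.region_subset_chamber hF hχ).1
    have hpos := R.inner_msum_pos hdom hm hall
    rw [← hsum] at hpos
    rw [hβeq, inner_sub_left]
    have := hγ.2 χ hχ
    linarith

lemma gtOne_upclosed {F : Set V} (hF : R.IsRegion F) {γ β : V} (hγ : γ ∈ R.gtOne F)
    (hβ : β ∈ R.pos) (hge : R.Ge β γ) : β ∈ R.gtOne F := by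
  rcases hge with hgt | rfl
  · refine ⟨hβ, ?_⟩
    intro χ hχ
    obtain ⟨m, hm, hall, hsum⟩ := hgt
    have hβeq : β = γ + (β - γ) := by abel
    have hdom := (R.region_subset_chamber hF hχ).1
    have hpos := R.inner_msum_pos hdom hm hall
    rw [← hsum] at hpos
    rw [hβeq, inner_add_left]
    have := hγ.2 χ hχ
    linarith
  · exact hγ

/-! ### Reconstruction of `ltOne`/`gtOne` from the antichains -/

lemma ltOne_eq_downcl {F : Set V} (hF : R.IsRegion F) :
    R.ltOne F = {β | β ∈ R.pos ∧ ∃ γ ∈ R.deltaLow F, R.Ge γ β} := by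
  ext β
  constructor
  · intro hβ
    refine ⟨hβ.1, ?_⟩
    have hTfin : {y | y ∈ R.ltOne F ∧ R.Ge y β}.Finite :=
      Set.Finite.subset (R.pos.finite_toSet) (fun y hy => by exact_mod_cast hy.1.1)
    have hTne : {y | y ∈ R.ltOne F ∧ R.Ge y β}.Nonempty := ⟨β, hβ, R.ge_refl β⟩
    obtain ⟨a, ha, hamax⟩ := Set.Finite.exists_maximalFor R.ell _ hTfin hTne
    refine ⟨a, ⟨ha.1, ?_⟩, ha.2⟩
    intro β' hβ' hgt
    have hβ'T : β' ∈ {y | y ∈ R.ltOne F ∧ R.Ge y β} :=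
      ⟨hβ', R.ge_trans' (Or.inl hgt) ha.2⟩
    have h1 := R.ell_sub_of_gt hgt
    have h2 := hamax hβ'T (by linarith)
    linarith
  · rintro ⟨hβpos, γ, hγd, hge⟩
    rcases hge with hgt | rfl
    · exact (R.ltOne_ideal hF).2 γ hγd.1 β (by exact_mod_cast hβpos) hgt
    · exact hγd.1

lemma gtOne_eq_upcl {F : Set V} (hF : R.IsRegion F) :
    R.gtOne F = {β | β ∈ R.pos ∧ ∃ γ ∈ R.deltaHigh F, R.Ge β γ} := by
  ext β
  constructor
  · intro hβ
    refine ⟨hβ.1, ?_⟩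
    have hTfin : {y | y ∈ R.gtOne F ∧ R.Ge β y}.Finite :=
      Set.Finite.subset (R.pos.finite_toSet) (fun y hy => by exact_mod_cast hy.1.1)
    have hTne : {y | y ∈ R.gtOne F ∧ R.Ge β y}.Nonempty := ⟨β, hβ, R.ge_refl β⟩
    obtain ⟨a, ha, hamin⟩ := Set.Finite.exists_maximalFor (fun y => -R.ell y) _ hTfin hTne
    refine ⟨a, ⟨ha.1, ?_⟩, ha.2⟩
    intro β' hβ' hgt
    have hβ'T : β' ∈ {y | y ∈ R.gtOne F ∧ R.Ge β y} :=
      ⟨hβ', R.ge_trans' ha.2 (Or.inl hgt)⟩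
    have h1 := R.ell_sub_of_gt hgt
    have h2 := hamin hβ'T (by simp; linarith)
    simp at h2
    linarith
  · rintro ⟨hβpos, γ, hγd, hge⟩
    exact R.gtOne_upclosed hF hγd.1 hβpos hge

lemma ltOne_eq_compl {F : Set V} (hF : R.IsRegion F) :
    R.ltOne F = {β | β ∈ R.pos ∧ β ∉ R.gtOne F} := by
  ext β
  constructor
  · intro hβ
    exact ⟨hβ.1, fun h => R.not_ltOne_and_gtOne hF hβ h⟩
  · rintro ⟨hβpos, hβn⟩
    rcases R.mem_ltOne_or_gtOne hF hβpos with h | h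
    · exact h
    · exact absurd h hβn

/-! ### A region is determined by `ltOne` -/

lemma region_eq_creg {F : Set V} (hF : R.IsRegion F) : F = R.Creg (R.ltOne F) := by
  have hfwd : F ⊆ R.Creg (R.ltOne F) := by
    intro χ hχ
    refine ⟨(R.region_subset_chamber hF hχ).1, ?_, ?_⟩
    · intro γ hγ
      exact hγ.2 χ hχ
    · intro β hβ hβn
      rcases R.mem_ltOne_or_gtOne hF hβ with h | h
      · exact absurd h hβn
      · exact h.2 χ hχ
  obtain ⟨χ0, hχ0, hFeq⟩ := hF
  apply Set.Subset.antisymm hfwd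
  have hχ0F : χ0 ∈ F := hFeq ▸ mem_connectedComponentIn hχ0
  have hpre : IsPreconnected (R.Creg (R.ltOne F)) := (R.creg_convex _).isPreconnected
  have hsub : R.Creg (R.ltOne F) ⊆ R.chamberSet := R.creg_subset_chamber _
  have hfin := hpre.subset_connectedComponentIn (hfwd hχ0F) hsub
  rwa [← hFeq] at hfin

/-! ### Antichains: closures and extremal elements -/

lemma deltaLow_antichain (F : Set V) : R.IsRootAntichain (R.deltaLow F) := by
  constructor
  · intro β hβ
    exact_mod_cast hβ.1.1
  · intro x hx y hy hne
    constructor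
    · intro hge
      rcases hge with hgt | heq
      · exact hy.2 x hx.1 hgt
      · exact hne heq
    · intro hge
      rcases hge with hgt | heq
      · exact hx.2 y hy.1 hgt
      · exact hne heq.symm

lemma deltaHigh_antichain (F : Set V) : R.IsRootAntichain (R.deltaHigh F) := by
  constructor
  · intro β hβ
    exact_mod_cast hβ.1.1
  · intro x hx y hy hne
    constructor
    · intro hge
      rcases hge with hgt | heq
      · exact hx.2 y hy.1 hgt
      · exact hne heq
    · intro hge
      rcases hge with hgt | heq
      · exact hy.2 x hx.1 hgt
      · exact hne heq.symm

lemma downcl_ideal {A : Set V} (hA : R.IsRootAntichain A) :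
    R.IsIdeal {β | β ∈ (R.pos : Set V) ∧ ∃ a ∈ A, R.Ge a β} := by
  constructor
  · intro β hβ
    exact hβ.1
  · intro γ hγ β hβ hgt
    obtain ⟨a, haA, hge⟩ := hγ.2
    exact ⟨hβ, a, haA, R.ge_trans' hge (Or.inl hgt)⟩

lemma upcl_compl_ideal {A : Set V} (hA : R.IsRootAntichain A) :
    R.IsIdeal {β | β ∈ (R.pos : Set V) ∧ ¬ ∃ a ∈ A, R.Ge β a} := by
  constructor
  · intro β hβ
    exact hβ.1
  · intro γ hγ β hβ hgt
    refine ⟨hβ, ?_⟩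
    rintro ⟨a, haA, hge⟩
    exact hγ.2 ⟨a, haA, R.ge_trans' (Or.inl hgt) hge⟩

lemma deltaLow_of_downcl {F : Set V} {A : Set V} (hA : R.IsRootAntichain A)
    (h : R.ltOne F = {β | β ∈ (R.pos : Set V) ∧ ∃ a ∈ A, R.Ge a β}) :
    R.deltaLow F = A := by
  ext β
  constructor
  · rintro ⟨hβlt, hβmax⟩
    have hβd := hβlt
    rw [h] at hβd
    obtain ⟨hβpos, a, haA, hge⟩ := hβd
    rcases hge with hgt | rfl
    · exfalso
      have hamem : a ∈ R.ltOne F := by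
        rw [h]
        exact ⟨by exact_mod_cast hA.1 haA, a, haA, R.ge_refl a⟩
      exact hβmax a hamem hgt
    · exact haA
  · intro hβA
    have hβmem : β ∈ R.ltOne F := by
      rw [h]
      exact ⟨by exact_mod_cast hA.1 hβA, β, hβA, R.ge_refl β⟩
    refine ⟨hβmem, ?_⟩
    intro β' hβ' hgt
    have hβ'd := hβ'
    rw [h] at hβ'd
    obtain ⟨hβ'pos, a, haA, hge⟩ := hβ'd
    have hgta : R.Gt a β := R.gt_of_ge_of_gt hge hgt
    have hane : a ≠ β := by
      intro e
      rw [e] at hgta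
      exact R.gt_irrefl' β hgta
    exact (hA.2 a haA β hβA hane).1 (Or.inl hgta)

lemma deltaHigh_of_upcl {F : Set V} {A : Set V} (hA : R.IsRootAntichain A)
    (h : R.gtOne F = {β | β ∈ (R.pos : Set V) ∧ ∃ a ∈ A, R.Ge β a}) :
    R.deltaHigh F = A := by
  ext β
  constructor
  · rintro ⟨hβgt, hβmin⟩
    have hβd := hβgt
    rw [h] at hβd
    obtain ⟨hβpos, a, haA, hge⟩ := hβd
    rcases hge with hgt | rfl
    · exfalso
      have hamem : a ∈ R.gtOne F := by
        rw [h]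
        exact ⟨by exact_mod_cast hA.1 haA, a, haA, R.ge_refl a⟩
      exact hβmin a hamem hgt
    · exact haA
  · intro hβA
    have hβmem : β ∈ R.gtOne F := by
      rw [h]
      exact ⟨by exact_mod_cast hA.1 hβA, β, hβA, R.ge_refl β⟩
    refine ⟨hβmem, ?_⟩
    intro β' hβ' hgt
    have hβ'd := hβ'
    rw [h] at hβ'd
    obtain ⟨hβ'pos, a, haA, hge⟩ := hβ'd
    have hgta : R.Gt β a := R.gt_of_gt_of_ge hgt hge
    have hane : β ≠ a := by
      intro e
      rw [e] at hgta
      exact R.gt_irrefl' a hgta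
    exact (hA.2 β hβA a haA hane).1 (Or.inl hgta)

end RootSystemData

/-- For every region `F`, `δ(F)` and `δ'(F)` are antichains, and
`F ↦ δ(F)`, `F ↦ δ'(F)` are bijections between regions and antichains. -/
theorem statement1 {V : Type} [NormedAddCommGroup V] [InnerProductSpace ℝ V]
    [FiniteDimensional ℝ V] (R : RootSystemData V) :
    (∀ F : Set V, R.IsRegion F →
      R.IsRootAntichain (R.deltaLow F) ∧ R.IsRootAntichain (R.deltaHigh F)) ∧
    Set.BijOn R.deltaLow {F | R.IsRegion F} {A | R.IsRootAntichain A} ∧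
    Set.BijOn R.deltaHigh {F | R.IsRegion F} {A | R.IsRootAntichain A} := by
  classical
  refine ⟨fun F _ => ⟨R.deltaLow_antichain F, R.deltaHigh_antichain F⟩,
    ⟨fun F _ => R.deltaLow_antichain F, ?_, ?_⟩,
    ⟨fun F _ => R.deltaHigh_antichain F, ?_, ?_⟩⟩
  · -- InjOn deltaLow
    intro F hF F' hF' heq
    have h1 : R.ltOne F = R.ltOne F' := by
      rw [R.ltOne_eq_downcl hF, R.ltOne_eq_downcl hF', heq]
    rw [R.region_eq_creg hF, R.region_eq_creg hF', h1]
  · -- SurjOn deltaLow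
    intro A hA
    have hA' : R.IsRootAntichain A := hA
    have hLI := R.downcl_ideal hA'
    obtain ⟨χ, hdom, hlt, hgt⟩ := R.exists_region_point hLI
    have hχc : χ ∈ R.chamberSet := by
      refine ⟨hdom, ?_⟩
      intro β hβ
      by_cases h : β ∈ {β | β ∈ (R.pos : Set V) ∧ ∃ a ∈ A, R.Ge a β}
      · exact ne_of_lt (hlt β h)
      · exact (ne_of_lt (hgt β hβ h)).symm
    have hFregion : R.IsRegion (connectedComponentIn R.chamberSet χ) := ⟨χ, hχc, rfl⟩
    have hχF : χ ∈ connectedComponentIn R.chamberSet χ := mem_connectedComponentIn hχc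
    refine ⟨connectedComponentIn R.chamberSet χ, hFregion, ?_⟩
    have hltOne : R.ltOne (connectedComponentIn R.chamberSet χ)
        = {β | β ∈ (R.pos : Set V) ∧ ∃ a ∈ A, R.Ge a β} := by
      ext β
      constructor
      · intro hβ
        by_cases h : β ∈ {β | β ∈ (R.pos : Set V) ∧ ∃ a ∈ A, R.Ge a β}
        · exact h
        · exact absurd (hβ.2 χ hχF) (not_lt.mpr (le_of_lt (hgt β hβ.1 h)))
      · intro hβ
        have hβpos : β ∈ R.pos := by exact_mod_cast hLI.1 hβ
        rcases R.mem_ltOne_or_gtOne hFregion hβpos with h | h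
        · exact h
        · exact absurd (h.2 χ hχF) (not_lt.mpr (le_of_lt (hlt β hβ)))
    exact R.deltaLow_of_downcl hA' hltOne
  · -- InjOn deltaHigh
    intro F hF F' hF' heq
    have h1 : R.gtOne F = R.gtOne F' := by
      rw [R.gtOne_eq_upcl hF, R.gtOne_eq_upcl hF', heq]
    have h2 : R.ltOne F = R.ltOne F' := by
      rw [R.ltOne_eq_compl hF, R.ltOne_eq_compl hF', h1]
    rw [R.region_eq_creg hF, R.region_eq_creg hF', h2]
  · -- SurjOn deltaHigh
    intro A hA
    have hA' : R.IsRootAntichain A := hA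
    have hLI := R.upcl_compl_ideal hA'
    obtain ⟨χ, hdom, hlt, hgt⟩ := R.exists_region_point hLI
    have hχc : χ ∈ R.chamberSet := by
      refine ⟨hdom, ?_⟩
      intro β hβ
      by_cases h : β ∈ {β | β ∈ (R.pos : Set V) ∧ ¬ ∃ a ∈ A, R.Ge β a}
      · exact ne_of_lt (hlt β h)
      · exact (ne_of_lt (hgt β hβ h)).symm
    have hFregion : R.IsRegion (connectedComponentIn R.chamberSet χ) := ⟨χ, hχc, rfl⟩
    have hχF : χ ∈ connectedComponentIn R.chamberSet χ := mem_connectedComponentIn hχc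
    refine ⟨connectedComponentIn R.chamberSet χ, hFregion, ?_⟩
    have hgtOne : R.gtOne (connectedComponentIn R.chamberSet χ)
        = {β | β ∈ (R.pos : Set V) ∧ ∃ a ∈ A, R.Ge β a} := by
      ext β
      constructor
      · intro hβ
        refine ⟨by exact_mod_cast hβ.1, ?_⟩
        by_contra h
        have hβL : β ∈ {β | β ∈ (R.pos : Set V) ∧ ¬ ∃ a ∈ A, R.Ge β a} :=
          ⟨by exact_mod_cast hβ.1, h⟩
        exact absurd (hβ.2 χ hχF) (not_lt.mpr (le_of_lt (hlt β hβL)))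
      · intro hβ
        have hβpos : β ∈ R.pos := by exact_mod_cast hβ.1
        have hβnL : β ∉ {β | β ∈ (R.pos : Set V) ∧ ¬ ∃ a ∈ A, R.Ge β a} :=
          fun hL => hL.2 hβ.2
        rcases R.mem_ltOne_or_gtOne hFregion hβpos with h | h
        · exact absurd (h.2 χ hχF) (not_lt.mpr (le_of_lt (hgt β hβpos hβnL)))
        · exact h
    exact R.deltaHigh_of_upcl hA' hgtOne
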